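/- arXiv:2501.06539 — 2 statements merged into one kernel-verified Lean document; each statement's English description precedes it below -/
import Mathlib

section
/- Let A ∈ ℝ^{n×n} with ‖A‖_2 ≤ 1/2, let ε ∈ (0,1/4), and suppose a sequence of matrices S_0 = A, S_{i+1} satisfies ‖S_{i+1} − S_i²‖_2 ≤ ε/4 for all i ≥ 0 and ‖S_1 − A²‖_2 ≤ ε/4. Then for every N ≥ 1, ‖S_N − A^{2^N}‖_2 ≤ ε, and in particular ‖S_N‖_2 ≤ ε + 2^{−2^N} ≤ 1/2. -/
open scoped Matrix.Norms.L2Operator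

/-- Quantitative induction for repeated approximate squaring: if `‖A‖₂ ≤ 1/2`,
`ε ∈ (0,1/4)`, `S 0 = A` and each step satisfies `‖S (i+1) − (S i)²‖₂ ≤ ε/4`,
then `‖S N − A^{2^N}‖₂ ≤ ε` and `‖S N‖₂ ≤ ε + 2^{−2^N} ≤ 1/2` for all `N ≥ 1`. -/
theorem approx_squaring_error (n : ℕ) (A : Matrix (Fin n) (Fin n) ℝ)
    (hA : ‖A‖ ≤ 1 / 2) (ε : ℝ) (hε : 0 < ε) (hε4 : ε < 1 / 4)
    (S : ℕ → Matrix (Fin n) (Fin n) ℝ) (hS0 : S 0 = A)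
    (hstep : ∀ i : ℕ, ‖S (i + 1) - (S i) ^ 2‖ ≤ ε / 4)
    (hS1 : ‖S 1 - A ^ 2‖ ≤ ε / 4) :
    ∀ N : ℕ, 1 ≤ N →
      ‖S N - A ^ (2 ^ N)‖ ≤ ε ∧
      ‖S N‖ ≤ ε + (2 : ℝ) ^ (-(2 ^ N : ℤ)) ∧
      ε + (2 : ℝ) ^ (-(2 ^ N : ℤ)) ≤ 1 / 2 := by
  -- Bound on powers of A
  have hApow : ∀ N : ℕ, 1 ≤ N → ‖A ^ (2 ^ N)‖ ≤ (1 / 2 : ℝ) ^ (2 ^ N) := by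
    intro N hN
    calc ‖A ^ (2 ^ N)‖ ≤ ‖A‖ ^ (2 ^ N) :=
          norm_pow_le' A (Nat.pow_pos (by norm_num))
      _ ≤ (1 / 2 : ℝ) ^ (2 ^ N) :=
          pow_le_pow_left₀ (norm_nonneg A) hA _
  have hquarter : ∀ N : ℕ, 1 ≤ N → (1 / 2 : ℝ) ^ (2 ^ N) ≤ 1 / 4 := by
    intro N hN
    have h2 : (2 : ℕ) ≤ 2 ^ N := by
      calc (2 : ℕ) = 2 ^ 1 := rfl
        _ ≤ 2 ^ N := Nat.pow_le_pow_right (by norm_num) hN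
    calc (1 / 2 : ℝ) ^ (2 ^ N) ≤ (1 / 2 : ℝ) ^ 2 :=
          pow_le_pow_of_le_one (by norm_num) (by norm_num) h2
      _ = 1 / 4 := by norm_num
  -- Main induction
  have key : ∀ N : ℕ, 1 ≤ N → ‖S N - A ^ (2 ^ N)‖ ≤ ε := by
    intro N
    induction N with
    | zero => intro h; omega
    | succ N ih =>
      intro _
      rcases Nat.eq_or_lt_of_le (Nat.one_le_iff_ne_zero.mpr (Nat.succ_ne_zero N)) with h1 | h1
      · -- N + 1 = 1
        have hN0 : N = 0 := by omega
        subst hN0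
        simpa using hS1.trans (by linarith)
      · have hN1 : 1 ≤ N := by omega
        have hE := ih hN1
        set B := A ^ (2 ^ N) with hB
        have hBn : ‖B‖ ≤ 1 / 4 := (hApow N hN1).trans (hquarter N hN1)
        have hSn : ‖S N‖ ≤ ε + 1 / 4 := by
          calc ‖S N‖ = ‖(S N - B) + B‖ := by congr 1; abel
            _ ≤ ‖S N - B‖ + ‖B‖ := norm_add_le _ _
            _ ≤ ε + 1 / 4 := add_le_add hE hBn
        have hfact : (S N) ^ 2 - B ^ 2 = (S N - B) * (S N) + B * (S N - B) := by
          noncomm_ring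
        have hsq : ‖(S N) ^ 2 - B ^ 2‖ ≤ ε * (ε + 1 / 4) + (1 / 4) * ε := by
          rw [hfact]
          calc ‖(S N - B) * (S N) + B * (S N - B)‖
              ≤ ‖(S N - B) * (S N)‖ + ‖B * (S N - B)‖ := norm_add_le _ _
            _ ≤ ‖S N - B‖ * ‖S N‖ + ‖B‖ * ‖S N - B‖ :=
                add_le_add (norm_mul_le _ _) (norm_mul_le _ _)
            _ ≤ ε * (ε + 1 / 4) + (1 / 4) * ε := by
                have h0 : (0:ℝ) ≤ ‖S N - B‖ := norm_nonneg _
                have h1 : (0:ℝ) ≤ ‖S N‖ := norm_nonneg _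
                have h2 : (0:ℝ) ≤ ‖B‖ := norm_nonneg _
                gcongr <;> linarith
        have hpow : A ^ (2 ^ (N + 1)) = B ^ 2 := by
          rw [hB, ← pow_mul, pow_succ]
        calc ‖S (N + 1) - A ^ (2 ^ (N + 1))‖
            = ‖(S (N + 1) - (S N) ^ 2) + ((S N) ^ 2 - B ^ 2)‖ := by rw [hpow]; congr 1; abel
          _ ≤ ‖S (N + 1) - (S N) ^ 2‖ + ‖(S N) ^ 2 - B ^ 2‖ := norm_add_le _ _
          _ ≤ ε / 4 + (ε * (ε + 1 / 4) + (1 / 4) * ε) := add_le_add (hstep N) hsq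
          _ ≤ ε := by nlinarith
  intro N hN
  have hzpow : (2 : ℝ) ^ (-(2 ^ N : ℤ)) = (1 / 2 : ℝ) ^ (2 ^ N) := by
    have hc : ((2:ℤ) ^ N : ℤ) = ((2 ^ N : ℕ) : ℤ) := by push_cast; ring
    rw [zpow_neg, hc, zpow_natCast, one_div, inv_pow]
  refine ⟨key N hN, ?_, ?_⟩
  · rw [hzpow]
    calc ‖S N‖ = ‖(S N - A ^ (2 ^ N)) + A ^ (2 ^ N)‖ := by congr 1; abel
      _ ≤ ‖S N - A ^ (2 ^ N)‖ + ‖A ^ (2 ^ N)‖ := norm_add_le _ _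
      _ ≤ ε + (1 / 2 : ℝ) ^ (2 ^ N) := add_le_add (key N hN) (hApow N hN)
  · rw [hzpow]
    have := hquarter N hN
    linarith
end

section
/- Let A ∈ ℝ^{n×n} with ‖A‖_2 ≤ 1. Then for every natural number i ≥ 0, ‖∏_{k=0}^{i} ((A/2)^{2^k} + 2^{−2^k} I)‖_2 ≤ 2^{i+2−2^{i+1}} ≤ 1/2 (the last inequality holding for i ≥ 1). -/
open scoped Matrix.Norms.L2Operator

lemma l2_norm_one_le (n : ℕ) : ‖(1 : Matrix (Fin n) (Fin n) ℝ)‖ ≤ 1 := by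
  rw [Matrix.l2_opNorm_def]
  have : ((Matrix.toEuclideanLin ≪≫ₗ LinearMap.toContinuousLinearMap)
      (1 : Matrix (Fin n) (Fin n) ℝ)) = ContinuousLinearMap.id ℝ _ := by
    ext x; simp [Matrix.toEuclideanLin]
  rw [this]
  exact ContinuousLinearMap.norm_id_le

lemma neumann_factor_bound (n : ℕ) (A : Matrix (Fin n) (Fin n) ℝ) (hA : ‖A‖ ≤ 1) (k : ℕ) :
    ‖((1 / 2 : ℝ) • A) ^ (2 ^ k) + ((2 : ℝ) ^ (-(2 ^ k : ℤ))) • (1 : Matrix (Fin n) (Fin n) ℝ)‖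
      ≤ (2 : ℝ) ^ (1 - (2 ^ k : ℤ)) := by
  have h1 : ‖((1 / 2 : ℝ) • A) ^ (2 ^ k)‖ ≤ (2 : ℝ) ^ (-(2 ^ k : ℤ)) := by
    calc ‖((1 / 2 : ℝ) • A) ^ (2 ^ k)‖ ≤ ‖(1 / 2 : ℝ) • A‖ ^ (2 ^ k) :=
          norm_pow_le' _ (Nat.pow_pos (n := k) (by norm_num))
      _ ≤ (1 / 2 : ℝ) ^ (2 ^ k) := by
          apply pow_le_pow_left₀ (norm_nonneg _)
          rw [norm_smul]
          calc ‖(1/2 : ℝ)‖ * ‖A‖ ≤ ‖(1/2 : ℝ)‖ * 1 := by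
                exact mul_le_mul_of_nonneg_left hA (norm_nonneg _)
            _ = 1/2 := by simp [Real.norm_eq_abs]
      _ = (2 : ℝ) ^ (-(2 ^ k : ℤ)) := by
          rw [zpow_neg, one_div, inv_pow, ← zpow_natCast (2:ℝ) (2^k)]
          norm_num
  have h2 : ‖((2 : ℝ) ^ (-(2 ^ k : ℤ))) • (1 : Matrix (Fin n) (Fin n) ℝ)‖
      ≤ (2 : ℝ) ^ (-(2 ^ k : ℤ)) := by
    rw [norm_smul]
    calc ‖(2 : ℝ) ^ (-(2 ^ k : ℤ))‖ * ‖(1 : Matrix (Fin n) (Fin n) ℝ)‖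
        ≤ ‖(2 : ℝ) ^ (-(2 ^ k : ℤ))‖ * 1 :=
          mul_le_mul_of_nonneg_left (l2_norm_one_le n) (norm_nonneg _)
      _ = (2 : ℝ) ^ (-(2 ^ k : ℤ)) := by
          rw [mul_one, Real.norm_eq_abs, abs_of_pos (zpow_pos (by norm_num) _)]
  calc ‖_ + _‖ ≤ _ := norm_add_le _ _
    _ ≤ (2 : ℝ) ^ (-(2 ^ k : ℤ)) + (2 : ℝ) ^ (-(2 ^ k : ℤ)) := add_le_add h1 h2
    _ = (2 : ℝ) ^ (1 - (2 ^ k : ℤ)) := by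
        rw [sub_eq_add_neg, zpow_add₀ (by norm_num : (2:ℝ) ≠ 0)]
        ring

lemma two_pow_ge (i : ℕ) (hi : 1 ≤ i) : i + 3 ≤ 2 ^ (i + 1) := by
  induction i with
  | zero => omega
  | succ j ih =>
    rcases Nat.eq_zero_or_pos j with h | h
    · subst h; norm_num
    · have := ih h
      have : 2 ^ (j + 1) ≤ 2 ^ (j + 2) := Nat.pow_le_pow_right (by norm_num) (by omega)
      omega

/-- If `‖A‖₂ ≤ 1`, then `‖∏_{k=0}^{i} ((A/2)^{2^k} + 2^{−2^k} I)‖₂ ≤ 2^{i+2−2^{i+1}}`,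
and this bound is at most `1/2` for `i ≥ 1`. -/
theorem neumann_factor_product_norm_bound (n : ℕ) (A : Matrix (Fin n) (Fin n) ℝ)
    (hA : ‖A‖ ≤ 1) (i : ℕ) :
    ‖((List.range (i + 1)).map (fun k =>
        ((1 / 2 : ℝ) • A) ^ (2 ^ k) + ((2 : ℝ) ^ (-(2 ^ k : ℤ))) • (1 : Matrix (Fin n) (Fin n) ℝ))).prod‖
      ≤ (2 : ℝ) ^ ((i : ℤ) + 2 - 2 ^ (i + 1)) ∧
    (1 ≤ i → (2 : ℝ) ^ ((i : ℤ) + 2 - 2 ^ (i + 1)) ≤ 1 / 2) := by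
  constructor
  · induction i with
    | zero =>
      simp only [List.range_succ, List.range_zero, List.nil_append, List.map_cons, List.map_nil, List.prod_cons, List.prod_nil,
        mul_one]
      have := neumann_factor_bound n A hA 0
      calc _ ≤ (2 : ℝ) ^ (1 - (2 ^ 0 : ℤ)) := this
        _ ≤ (2 : ℝ) ^ ((0 : ℤ) + 2 - 2 ^ (0 + 1)) := by norm_num
    | succ j ih =>
      rw [List.range_succ, List.map_append, List.prod_append]
      simp only [List.map_cons, List.map_nil, List.prod_cons, List.prod_nil, mul_one]
      calc ‖_ * _‖ ≤ _ := norm_mul_le _ _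
        _ ≤ (2 : ℝ) ^ ((j : ℤ) + 2 - 2 ^ (j + 1)) * (2 : ℝ) ^ (1 - (2 ^ (j+1) : ℤ)) :=
            mul_le_mul ih (neumann_factor_bound n A hA (j+1)) (norm_nonneg _)
              (zpow_nonneg (by norm_num) _)
        _ = (2 : ℝ) ^ (((j:ℕ)+1 : ℤ) + 2 - 2 ^ (j + 1 + 1)) := by
            rw [← zpow_add₀ (by norm_num : (2:ℝ) ≠ 0)]
            congr 1
            ring
        _ = (2 : ℝ) ^ (((j+1 : ℕ) : ℤ) + 2 - 2 ^ (j + 1 + 1)) := by norm_num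
  · intro hi
    have h : (i : ℤ) + 2 - 2 ^ (i + 1) ≤ -1 := by
      have := two_pow_ge i hi
      have h2 : ((i : ℤ) + 3) ≤ 2 ^ (i + 1) := by exact_mod_cast this
      omega
    calc (2 : ℝ) ^ ((i : ℤ) + 2 - 2 ^ (i + 1)) ≤ (2 : ℝ) ^ (-1 : ℤ) :=
          zpow_le_zpow_right₀ (by norm_num) h
      _ = 1 / 2 := by norm_num
end
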